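/- Let Y_1,…,Y_n be i.i.d. non-negative random variables with order statistics Y_{1,n} ≤ … ≤ Y_{n,n}, with Y_{n−1,n} > 0 a.s. and the relevant expectations finite. Then E[Y_{n,n} ln Y_{n,n}] ≤ E[Y_{n,n}] ln(E[Y_{n,n}]) + E[(Y_{n,n} − Y_{n−1,n})² / Y_{n−1,n}]. -/

import Mathlib

open MeasureTheory ProbabilityTheory Real

-- A1
lemma aux_A1 {a c : ℝ} (ha : 0 ≤ a) (hc : 0 < c) : a - c ≤ a * Real.log a - a * Real.log c := by
  rcases eq_or_lt_of_le ha with h | h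
  · simp [← h]; positivity
  · have h1 : Real.log (c / a) ≤ c / a - 1 := Real.log_le_sub_one_of_pos (by positivity)
    have h2 : Real.log (c / a) = Real.log c - Real.log a := Real.log_div hc.ne' h.ne'
    have h3 : Real.log c - Real.log a ≤ c / a - 1 := h2 ▸ h1
    have h4 := mul_le_mul_of_nonneg_left h3 h.le
    have : a * (c / a - 1) = c - a := by field_simp
    nlinarith [h4, this]

-- Young scaled : z * t ≤ z log z - z log a - z + a * exp t
lemma aux_young {z a t : ℝ} (hz : 0 ≤ z) (ha : 0 < a) :
    z * t ≤ z * Real.log z - z * Real.log a - z + a * Real.exp t := by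
  rcases eq_or_lt_of_le hz with h | h
  · simp [← h]; positivity
  · have key : t - (Real.log z - Real.log a) + 1 ≤ Real.exp (t - (Real.log z - Real.log a)) :=
      Real.add_one_le_exp _
    have he : Real.exp (t - (Real.log z - Real.log a)) = a * Real.exp t / z := by
      rw [Real.exp_sub, Real.exp_sub, Real.exp_log h, Real.exp_log ha]
      field_simp
    rw [he] at key
    have := mul_le_mul_of_nonneg_left key h.le
    have hz' : z * (a * Real.exp t / z) = a * Real.exp t := by field_simp
    nlinarith [this, hz']

-- A3
lemma aux_A3 {a b : ℝ} (hb : 0 < b) (hab : b ≤ a) :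
    a * Real.log a - a * Real.log b - (a - b) ≤ (a - b) ^ 2 / b := by
  have ha : 0 < a := lt_of_lt_of_le hb hab
  have h1 : Real.log (a / b) ≤ a / b - 1 := Real.log_le_sub_one_of_pos (by positivity)
  have h2 : Real.log (a / b) = Real.log a - Real.log b := Real.log_div ha.ne' hb.ne'
  have h3 : a * (Real.log a - Real.log b) ≤ a * (a / b - 1) :=
    mul_le_mul_of_nonneg_left (h2 ▸ h1) ha.le
  have h4 : a * (a / b - 1) - (a - b) = (a - b) ^ 2 / b := by field_simp
  nlinarith [h3, h4]

lemma lemC {α : Type*} [MeasurableSpace α] (μ : Measure α) [IsProbabilityMeasure μ]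
    (z v : α → ℝ) (c w : ℝ) (hc : 0 < c) (hw : 0 < w)
    (hz0 : ∀ᵐ t ∂μ, 0 ≤ z t) (hv0 : ∀ᵐ t ∂μ, 0 < v t)
    (hzint : Integrable z μ) (hzz : Integrable (fun t => z t * Real.log (z t)) μ)
    (hzv : Integrable (fun t => z t * Real.log (v t)) μ) (hvint : Integrable v μ)
    (hvw : ∫ t, v t ∂μ = w) :
    ∫ t, z t * (Real.log (v t) - Real.log w) ∂μ
      ≤ ∫ t, (z t * Real.log (z t) - z t * Real.log c - z t + c) ∂μ := by
  set a := ∫ t, z t ∂μ with ha_def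
  have ha0 : 0 ≤ a := integral_nonneg_of_ae hz0
  have hLint : Integrable (fun t => z t * (Real.log (v t) - Real.log w)) μ := by
    have : (fun t => z t * (Real.log (v t) - Real.log w))
        = fun t => z t * Real.log (v t) - z t * Real.log w := by ext t; ring
    rw [this]
    exact hzv.sub (hzint.mul_const _)
  have hRint : Integrable (fun t => z t * Real.log (z t) - z t * Real.log c - z t + c) μ :=
    (((hzz.sub (hzint.mul_const _)).sub hzint).add (integrable_const c))
  have hRval : ∫ t, (z t * Real.log (z t) - z t * Real.log c - z t + c) ∂μ
      = (∫ t, z t * Real.log (z t) ∂μ) - a * Real.log c - a + c := by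
    have i1 : Integrable (fun t => z t * Real.log (z t) - z t * Real.log c) μ :=
      hzz.sub (hzint.mul_const _)
    have i2 : Integrable (fun t => z t * Real.log (z t) - z t * Real.log c - z t) μ :=
      i1.sub hzint
    rw [integral_add i2 (integrable_const c), integral_sub i1 hzint,
      integral_sub hzz (hzint.mul_const _), integral_mul_const, integral_const]
    simp [ha_def]
  rcases eq_or_lt_of_le ha0 with haz | hapos
  · have hz_eq : z =ᵐ[μ] 0 := (integral_eq_zero_iff_of_nonneg_ae hz0 hzint).mp haz.symm
    have hL : ∫ t, z t * (Real.log (v t) - Real.log w) ∂μ = 0 := by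
      have h0 : (fun t => z t * (Real.log (v t) - Real.log w)) =ᵐ[μ] 0 := by
        filter_upwards [hz_eq] with t ht; simp [ht]
      rw [integral_congr_ae h0]; simp
    have hzz0 : ∫ t, z t * Real.log (z t) ∂μ = 0 := by
      have h0 : (fun t => z t * Real.log (z t)) =ᵐ[μ] 0 := by
        filter_upwards [hz_eq] with t ht; simp [ht]
      rw [integral_congr_ae h0]; simp
    rw [hL, hRval, hzz0, ← haz]
    simp
    nlinarith
  · -- main case
    have hpoint : ∀ᵐ t ∂μ, z t * (Real.log (v t) - Real.log w)
        ≤ z t * Real.log (z t) - z t * Real.log a - z t + (a / w) * v t := by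
      filter_upwards [hz0, hv0] with t htz htv
      have h := aux_young (z := z t) (a := a) (t := Real.log (v t) - Real.log w) htz hapos
      have he : Real.exp (Real.log (v t) - Real.log w) = v t / w := by
        rw [Real.exp_sub, Real.exp_log htv, Real.exp_log hw]
      rw [he] at h
      calc z t * (Real.log (v t) - Real.log w)
          ≤ z t * Real.log (z t) - z t * Real.log a - z t + a * (v t / w) := h
        _ = z t * Real.log (z t) - z t * Real.log a - z t + (a / w) * v t := by ring
    have hMint : Integrable
        (fun t => z t * Real.log (z t) - z t * Real.log a - z t + (a / w) * v t) μ :=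
      (((hzz.sub (hzint.mul_const _)).sub hzint).add (hvint.const_mul _))
    have hMval : ∫ t, (z t * Real.log (z t) - z t * Real.log a - z t + (a / w) * v t) ∂μ
        = (∫ t, z t * Real.log (z t) ∂μ) - a * Real.log a := by
      have i1 : Integrable (fun t => z t * Real.log (z t) - z t * Real.log a) μ :=
        hzz.sub (hzint.mul_const _)
      have i2 : Integrable (fun t => z t * Real.log (z t) - z t * Real.log a - z t) μ :=
        i1.sub hzint
      have i3 : Integrable (fun t => a / w * v t) μ := hvint.const_mul _
      rw [integral_add i2 i3, integral_sub i1 hzint,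
        integral_sub hzz (hzint.mul_const _), integral_mul_const, integral_const_mul, hvw]
      field_simp
      rw [← ha_def]
      ring
    have h1 : ∫ t, z t * (Real.log (v t) - Real.log w) ∂μ
        ≤ (∫ t, z t * Real.log (z t) ∂μ) - a * Real.log a := by
      rw [← hMval]; exact integral_mono_ae hLint hMint hpoint
    have h2 := aux_A1 ha0 hc
    rw [hRval]
    linarith

section MP
variable {n : ℕ} (μ : Measure ℝ) [IsProbabilityMeasure μ]

lemma mp_update (i : Fin n) :
    MeasurePreserving (fun p : (Fin n → ℝ) × ℝ => Function.update p.1 i p.2)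
      ((Measure.pi fun _ => μ).prod μ) (Measure.pi fun _ => μ) := by
  have hmeas : Measurable (fun p : (Fin n → ℝ) × ℝ => Function.update p.1 i p.2) := by
    apply measurable_pi_lambda
    intro j
    have : (fun p : (Fin n → ℝ) × ℝ => Function.update p.1 i p.2 j)
        = fun p => if j = i then p.2 else p.1 j := by
      ext p; simp [Function.update_apply]
    rw [this]
    by_cases h : j = i
    · simpa [h] using measurable_snd
    · simpa [h, Function.comp_def] using (measurable_pi_apply j).comp measurable_fst
  refine ⟨hmeas, ?_⟩
  refine (Measure.pi_eq fun s hs => ?_).symm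
  rw [Measure.map_apply hmeas (MeasurableSet.univ_pi hs)]
  have hpre : (fun p : (Fin n → ℝ) × ℝ => Function.update p.1 i p.2) ⁻¹' (Set.pi Set.univ s)
      = (Set.pi Set.univ fun j => if j = i then Set.univ else s j) ×ˢ (s i) := by
    ext ⟨x, t⟩
    simp only [Set.mem_preimage, Set.mem_pi, Set.mem_univ, forall_true_left, Set.mem_prod]
    constructor
    · intro h
      refine ⟨fun j => ?_, by simpa using h i⟩
      by_cases hj : j = i
      · simp [hj]
      · simpa [hj, Function.update_apply] using h j
    · rintro ⟨h1, h2⟩ j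
      by_cases hj : j = i
      · subst hj; simpa using h2
      · have := h1 j; simpa [hj, Function.update_apply] using this
  rw [hpre, Measure.prod_prod, Measure.pi_pi]
  have h1 : (∏ j, μ (if j = i then Set.univ else s j)) * μ (s i)
      = ∏ j, μ (s j) := by
    have e1 : μ (s i) = ∏ j, (if j = i then μ (s j) else 1) := by
      rw [Finset.prod_ite_eq' Finset.univ i (fun j => μ (s j))]
      simp
    rw [e1, ← Finset.prod_mul_distrib]
    apply Finset.prod_congr rfl
    intro j _
    by_cases hj : j = i <;> simp [hj]
  rw [← h1]

lemma mp_merge (k : ℕ) :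
    MeasurePreserving
      (fun p : (Fin n → ℝ) × (Fin n → ℝ) => fun j : Fin n => if (j : ℕ) < k then p.1 j else p.2 j)
      ((Measure.pi fun _ : Fin n => μ).prod (Measure.pi fun _ : Fin n => μ))
      (Measure.pi fun _ : Fin n => μ) := by
  have hmeas : Measurable
      (fun p : (Fin n → ℝ) × (Fin n → ℝ) => fun j : Fin n => if (j : ℕ) < k then p.1 j else p.2 j) := by
    apply measurable_pi_lambda
    intro j
    by_cases h : (j : ℕ) < k
    · simpa [h, Function.comp_def] using (measurable_pi_apply j).comp measurable_fst
    · simpa [h, Function.comp_def] using (measurable_pi_apply j).comp measurable_snd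
  refine ⟨hmeas, ?_⟩
  refine (Measure.pi_eq fun s hs => ?_).symm
  rw [Measure.map_apply hmeas (MeasurableSet.univ_pi hs)]
  have hpre : (fun p : (Fin n → ℝ) × (Fin n → ℝ) =>
        fun j : Fin n => if (j : ℕ) < k then p.1 j else p.2 j) ⁻¹' (Set.pi Set.univ s)
      = (Set.pi Set.univ fun j : Fin n => if (j : ℕ) < k then s j else Set.univ)
        ×ˢ (Set.pi Set.univ fun j : Fin n => if (j : ℕ) < k then Set.univ else s j) := by
    ext ⟨x, y⟩
    simp only [Set.mem_preimage, Set.mem_pi, Set.mem_univ, forall_true_left, Set.mem_prod]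
    constructor
    · intro h
      constructor <;> intro j <;> by_cases hj : (j : ℕ) < k <;> simp [hj] <;>
        simpa [hj] using h j
    · rintro ⟨h1, h2⟩ j
      by_cases hj : (j : ℕ) < k
      · simpa [hj] using h1 j
      · simpa [hj] using h2 j
  rw [hpre, Measure.prod_prod, Measure.pi_pi, Measure.pi_pi, ← Finset.prod_mul_distrib]
  apply Finset.prod_congr rfl
  intro j _
  by_cases hj : (j : ℕ) < k <;> simp [hj]

end MP

section Defs
variable {n : ℕ}

lemma erase_ne (hn : 2 ≤ n) (i : Fin n) : (Finset.univ.erase i).Nonempty := by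
  apply Finset.card_pos.mp
  rw [Finset.card_erase_of_mem (Finset.mem_univ i), Finset.card_univ, Fintype.card_fin]
  omega

lemma univ_ne (hn : 2 ≤ n) : (Finset.univ : Finset (Fin n)).Nonempty :=
  Finset.univ_nonempty_iff.mpr (Fin.pos_iff_nonempty.mp (by omega))

noncomputable def Gfun (hn : 2 ≤ n) (i : Fin n) (x : Fin n → ℝ) : ℝ :=
  (Finset.univ.erase i).sup' (erase_ne hn i) (fun j => x j)

noncomputable def Sfun (hn : 2 ≤ n) (x : Fin n → ℝ) : ℝ :=
  Finset.univ.inf' (univ_ne hn) (fun i => Gfun hn i x)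

noncomputable def Ffun (hn : 2 ≤ n) (x : Fin n → ℝ) : ℝ :=
  Finset.univ.sup' (univ_ne hn) (fun i => x i)

lemma Ffun_eq_iSup (hn : 2 ≤ n) (x : Fin n → ℝ) : Ffun hn x = ⨆ i, x i := by
  haveI : Nonempty (Fin n) := Fin.pos_iff_nonempty.mp (by omega)
  apply le_antisymm
  · exact Finset.sup'_le _ _ fun i _ => le_ciSup (Set.Finite.bddAbove (Set.finite_range _)) i
  · exact ciSup_le fun i => Finset.le_sup' _ (Finset.mem_univ i)

lemma le_Ffun (hn : 2 ≤ n) (x : Fin n → ℝ) (j : Fin n) : x j ≤ Ffun hn x :=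
  Finset.le_sup' _ (Finset.mem_univ j)

lemma Gfun_le_Ffun (hn : 2 ≤ n) (i : Fin n) (x : Fin n → ℝ) : Gfun hn i x ≤ Ffun hn x :=
  Finset.sup'_le _ _ fun j _ => le_Ffun hn x j

lemma Sfun_le_Gfun (hn : 2 ≤ n) (i : Fin n) (x : Fin n → ℝ) : Sfun hn x ≤ Gfun hn i x :=
  Finset.inf'_le _ (Finset.mem_univ i)

lemma Sfun_le_Ffun (hn : 2 ≤ n) (x : Fin n → ℝ) : Sfun hn x ≤ Ffun hn x :=
  (Sfun_le_Gfun hn (univ_ne hn).choose x).trans (Gfun_le_Ffun hn _ x)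

lemma exists_argmax (hn : 2 ≤ n) (x : Fin n → ℝ) :
    ∃ i0 : Fin n, Ffun hn x = x i0 ∧ Sfun hn x = Gfun hn i0 x ∧
      ∀ i, i ≠ i0 → Gfun hn i x = Ffun hn x := by
  obtain ⟨i0, _, h0⟩ := Finset.exists_mem_eq_sup' (univ_ne hn) (fun i : Fin n => x i)
  have hGF : ∀ i, i ≠ i0 → Gfun hn i x = Ffun hn x := by
    intro i hi
    apply le_antisymm (Gfun_le_Ffun hn i x)
    calc Ffun hn x = x i0 := h0
      _ ≤ Gfun hn i x :=
          Finset.le_sup' (fun j : Fin n => x j) (Finset.mem_erase.mpr ⟨Ne.symm hi, Finset.mem_univ _⟩)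
  refine ⟨i0, h0, le_antisymm (Sfun_le_Gfun hn i0 x) ?_, hGF⟩
  apply Finset.le_inf'
  intro i _
  by_cases hi : i = i0
  · subst hi; exact le_refl _
  · rw [hGF i hi]
    calc Gfun hn i0 x ≤ Ffun hn x := Gfun_le_Ffun hn i0 x

lemma sum_D_eq (hn : 2 ≤ n) (x : Fin n → ℝ) :
    ∑ i : Fin n, (Ffun hn x * Real.log (Ffun hn x) - Ffun hn x * Real.log (Gfun hn i x)
        - Ffun hn x + Gfun hn i x)
      = Ffun hn x * Real.log (Ffun hn x) - Ffun hn x * Real.log (Sfun hn x)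
        - Ffun hn x + Sfun hn x := by
  obtain ⟨i0, _, hS, hG⟩ := exists_argmax hn x
  rw [← Finset.sum_erase_add _ _ (Finset.mem_univ i0)]
  have h1 : ∑ i ∈ Finset.univ.erase i0, (Ffun hn x * Real.log (Ffun hn x)
      - Ffun hn x * Real.log (Gfun hn i x) - Ffun hn x + Gfun hn i x) = 0 := by
    apply Finset.sum_eq_zero
    intro i hi
    rw [hG i (Finset.mem_erase.mp hi).1]
    ring
  rw [h1, hS]
  ring

lemma Gfun_measurable (hn : 2 ≤ n) (i : Fin n) : Measurable (Gfun hn i) := by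
  have : Gfun hn i = (Finset.univ.erase i).sup' (erase_ne hn i) (fun j (x : Fin n → ℝ) => x j) := by
    funext x; rw [Finset.sup'_apply]; rfl
  rw [this]
  exact Finset.measurable_sup' _ fun j _ => measurable_pi_apply j

lemma Sfun_measurable (hn : 2 ≤ n) : Measurable (Sfun hn) := by
  have : Sfun hn = Finset.univ.inf' (univ_ne hn) (fun i (x : Fin n → ℝ) => Gfun hn i x) := by
    funext x; rw [Finset.inf'_apply]; rfl
  rw [this]
  exact Finset.inf'_induction _ _ (fun f hf g hg => Measurable.inf hf hg)
    (fun i _ => Gfun_measurable hn i)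

lemma Ffun_measurable (hn : 2 ≤ n) : Measurable (Ffun hn) := by
  have : Ffun hn = Finset.univ.sup' (univ_ne hn) (fun j (x : Fin n → ℝ) => x j) := by
    funext x; rw [Finset.sup'_apply]; rfl
  rw [this]
  exact Finset.measurable_sup' _ fun j _ => measurable_pi_apply j

def mergeFun (k : ℕ) (x y : Fin n → ℝ) : Fin n → ℝ := fun j => if (j : ℕ) < k then x j else y j

lemma Gfun_update (hn : 2 ≤ n) (i : Fin n) (x : Fin n → ℝ) (t : ℝ) :
    Gfun hn i (Function.update x i t) = Gfun hn i x := by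
  apply Finset.sup'_congr _ rfl
  intro j hj
  exact Function.update_of_ne (Finset.mem_erase.mp hj).1 _ _

end Defs

section U
variable {n : ℕ} (μ : Measure ℝ) [IsProbabilityMeasure μ]

lemma mp_eval (i : Fin n) :
    MeasurePreserving (fun x : Fin n → ℝ => x i) (Measure.pi fun _ => μ) μ := by
  refine ⟨measurable_pi_apply i, ?_⟩
  ext s hs
  rw [Measure.map_apply (measurable_pi_apply i) hs]
  have hpre : (fun x : Fin n → ℝ => x i) ⁻¹' s
      = Set.pi Set.univ (fun j => if j = i then s else Set.univ) := by
    ext x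
    simp only [Set.mem_preimage, Set.mem_pi, Set.mem_univ, forall_true_left]
    constructor
    · intro h j
      by_cases hj : j = i
      · subst hj; simpa using h
      · simp [hj]
    · intro h
      have := h i
      simpa using this
  rw [hpre, Measure.pi_pi]
  have : ∀ j : Fin n, μ (if j = i then s else Set.univ) = if j = i then μ s else 1 := by
    intro j; by_cases hj : j = i <;> simp [hj]
  rw [Finset.prod_congr rfl fun j _ => this j, Finset.prod_ite_eq' Finset.univ i (fun _ => μ s)]
  simp

lemma merge_measurable (k : ℕ) :
    Measurable (fun p : (Fin n → ℝ) × (Fin n → ℝ) => mergeFun k p.1 p.2) := by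
  apply measurable_pi_lambda
  intro j
  unfold mergeFun
  by_cases h : (j : ℕ) < k
  · simpa [h, Function.comp_def] using (measurable_pi_apply j).comp (measurable_fst (α := Fin n → ℝ) (β := Fin n → ℝ))
  · simpa [h, Function.comp_def] using (measurable_pi_apply j).comp (measurable_snd (α := Fin n → ℝ) (β := Fin n → ℝ))

noncomputable def Ufun (hn : 2 ≤ n) (k : ℕ) (x : Fin n → ℝ) : ℝ :=
  ∫ y, Ffun hn (mergeFun k x y) ∂(Measure.pi fun _ : Fin n => μ)

lemma Ufun_stronglyMeasurable (hn : 2 ≤ n) (k : ℕ) : StronglyMeasurable (Ufun μ hn k) := by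
  apply MeasureTheory.StronglyMeasurable.integral_prod_right'
    (f := fun p : (Fin n → ℝ) × (Fin n → ℝ) => Ffun hn (mergeFun k p.1 p.2))
  exact ((Ffun_measurable hn).comp (merge_measurable k)).stronglyMeasurable

lemma mergeFun_self (k : ℕ) (hk : n ≤ k) (x y : Fin n → ℝ) : mergeFun k x y = x := by
  funext j
  simp [mergeFun, lt_of_lt_of_le j.isLt hk]

lemma mergeFun_zero (x y : Fin n → ℝ) : mergeFun 0 x y = y := by
  funext j; simp [mergeFun]

lemma Ufun_top (hn : 2 ≤ n) (k : ℕ) (hk : n ≤ k) (x : Fin n → ℝ) :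
    Ufun μ hn k x = Ffun hn x := by
  unfold Ufun
  simp [mergeFun_self k hk x]

lemma Ufun_zero (hn : 2 ≤ n) (x : Fin n → ℝ) :
    Ufun μ hn 0 x = ∫ y, Ffun hn y ∂(Measure.pi fun _ : Fin n => μ) := by
  unfold Ufun
  simp [mergeFun_zero]

lemma Ufun_congr (hn : 2 ≤ n) (k : ℕ) {x x' : Fin n → ℝ}
    (h : ∀ j : Fin n, (j : ℕ) < k → x j = x' j) : Ufun μ hn k x = Ufun μ hn k x' := by
  unfold Ufun
  congr 1
  funext y
  congr 1
  funext j
  by_cases hj : (j : ℕ) < k <;> simp [mergeFun, hj, h]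

lemma Ufun_update_eq (hn : 2 ≤ n) (k : ℕ) (κ : Fin n) (hκ : (κ : ℕ) = k) (x : Fin n → ℝ) (t : ℝ) :
    Ufun μ hn k (Function.update x κ t) = Ufun μ hn k x := by
  apply Ufun_congr
  intro j hj
  apply Function.update_of_ne
  intro h
  rw [h, hκ] at hj
  omega

lemma merge_upd (k : ℕ) (κ : Fin n) (hκ : (κ : ℕ) = k) (x y : Fin n → ℝ) (t : ℝ) :
    mergeFun k x (Function.update y κ t) = mergeFun (k + 1) (Function.update x κ t) y := by
  funext j
  rcases lt_trichotomy (j : ℕ) k with h | h | h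
  · have hj : j ≠ κ := by intro he; rw [he, hκ] at h; omega
    simp [mergeFun, h, Nat.lt_succ_of_lt h, Function.update_of_ne hj]
  · have hj : j = κ := by apply Fin.ext; omega
    subst hj
    simp [mergeFun, h, Function.update_self]
  · have hj : j ≠ κ := by intro he; rw [he, hκ] at h; omega
    have h1 : ¬ (j : ℕ) < k := by omega
    have h2 : ¬ (j : ℕ) < k + 1 := by omega
    simp [mergeFun, h1, h2, Function.update_of_ne hj]

end U

section Core
variable {n : ℕ}

noncomputable def Dfun (hn : 2 ≤ n) (i : Fin n) (x : Fin n → ℝ) : ℝ :=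
  Ffun hn x * Real.log (Ffun hn x) - Ffun hn x * Real.log (Gfun hn i x) - Ffun hn x + Gfun hn i x

lemma Dfun_measurable (hn : 2 ≤ n) (i : Fin n) : Measurable (Dfun hn i) := by
  unfold Dfun
  have hF := Ffun_measurable hn
  have hG := Gfun_measurable hn i
  exact (((hF.mul (Real.measurable_log.comp hF)).sub
    (hF.mul (Real.measurable_log.comp hG))).sub hF).add hG

lemma sum_Dfun_eq (hn : 2 ≤ n) (x : Fin n → ℝ) :
    ∑ i : Fin n, Dfun hn i x
      = Ffun hn x * Real.log (Ffun hn x) - Ffun hn x * Real.log (Sfun hn x)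
        - Ffun hn x + Sfun hn x := by
  simpa [Dfun] using sum_D_eq hn x

lemma Dfun_update (hn : 2 ≤ n) (i : Fin n) (x : Fin n → ℝ) (t : ℝ) :
    Dfun hn i (Function.update x i t)
      = Ffun hn (Function.update x i t) * Real.log (Ffun hn (Function.update x i t))
        - Ffun hn (Function.update x i t) * Real.log (Gfun hn i x)
        - Ffun hn (Function.update x i t) + Gfun hn i x := by
  unfold Dfun
  rw [Gfun_update]

theorem core (hn : 2 ≤ n) (μ : Measure ℝ) [IsProbabilityMeasure μ]
    (hpos : ∀ᵐ x ∂(Measure.pi fun _ : Fin n => μ), 0 < Sfun hn x)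
    (hFint : Integrable (Ffun hn) (Measure.pi fun _ : Fin n => μ))
    (hFlog : Integrable (fun x => Ffun hn x * Real.log (Ffun hn x))
      (Measure.pi fun _ : Fin n => μ))
    (hRint : Integrable (fun x => (Ffun hn x - Sfun hn x) ^ 2 / Sfun hn x)
      (Measure.pi fun _ : Fin n => μ)) :
    ∫ x, Ffun hn x * Real.log (Ffun hn x) ∂(Measure.pi fun _ : Fin n => μ)
      ≤ (∫ x, Ffun hn x ∂(Measure.pi fun _ : Fin n => μ))
          * Real.log (∫ x, Ffun hn x ∂(Measure.pi fun _ : Fin n => μ))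
        + ∫ x, (Ffun hn x - Sfun hn x) ^ 2 / Sfun hn x ∂(Measure.pi fun _ : Fin n => μ) := by
  haveI hne : Nonempty (Fin n) := Fin.pos_iff_nonempty.mp (by omega)
  set P : Measure (Fin n → ℝ) := Measure.pi fun _ : Fin n => μ with hPdef
  haveI hPprob : IsProbabilityMeasure P := by rw [hPdef]; infer_instance
  set jl : Fin n := ⟨n - 1, by omega⟩ with hjl
  -- step 1 : a.e. positivity of μ
  have hμpos : ∀ᵐ t ∂μ, 0 < t := by
    have hS0 : P {x | ¬ (0 < Sfun hn x)} = 0 := ae_iff.mp hpos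
    have hbox : Set.pi Set.univ (fun _ : Fin n => Set.Iic (0 : ℝ))
        ⊆ {x | ¬ (0 < Sfun hn x)} := by
      intro x hx
      have hS : Sfun hn x ≤ 0 := by
        refine (Sfun_le_Gfun hn jl x).trans ?_
        apply Finset.sup'_le
        intro j _
        exact hx j (Set.mem_univ j)
      simpa using not_lt.mpr hS
    have hboxval : P (Set.pi Set.univ (fun _ : Fin n => Set.Iic (0 : ℝ)))
        = μ (Set.Iic (0 : ℝ)) ^ n := by
      rw [hPdef, Measure.pi_pi, Finset.prod_const, Finset.card_univ, Fintype.card_fin]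
    have hq : μ (Set.Iic (0 : ℝ)) ^ n = 0 :=
      le_antisymm (hboxval ▸ (measure_mono hbox).trans hS0.le) zero_le
    have hq0 : μ (Set.Iic (0 : ℝ)) = 0 := by
      rwa [pow_eq_zero_iff (by omega : n ≠ 0)] at hq
    rw [ae_iff]
    convert hq0 using 2
    ext t
    simp
  -- step 2 : coordinates positive a.e.
  have hcoord : ∀ᵐ x ∂P, ∀ j, 0 < x j := by
    rw [ae_all_iff]
    intro j
    have hmap := (mp_eval (n := n) μ j).map_eq
    rw [hPdef]
    rw [← hmap] at hμpos
    exact (ae_map_iff (measurable_pi_apply j).aemeasurable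
      (measurableSet_lt measurable_const measurable_id)).mp hμpos
  have hFpos : ∀ᵐ x ∂P, 0 < Ffun hn x := by
    filter_upwards [hcoord] with x hx
    exact lt_of_lt_of_le (hx jl) (le_Ffun hn x jl)
  have hFnonneg : ∀ᵐ x ∂P, 0 ≤ Ffun hn x := by
    filter_upwards [hFpos] with x hx; exact hx.le
  -- step 5 : the mean of μ
  have hid_int : Integrable (fun t : ℝ => t) μ := by
    have heval : Integrable (fun x : Fin n → ℝ => x jl) P := by
      apply hFint.mono (measurable_pi_apply jl).aestronglyMeasurable
      filter_upwards [hcoord] with x hx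
      rw [Real.norm_eq_abs, Real.norm_eq_abs, abs_of_pos (hx jl),
        abs_of_pos (lt_of_lt_of_le (hx jl) (le_Ffun hn x jl))]
      exact le_Ffun hn x jl
    have := ((mp_eval (n := n) μ jl).integrable_comp
      measurable_id.aestronglyMeasurable).mp (by simpa [Function.comp] using heval)
    exact this
  set m0 : ℝ := ∫ t, t ∂μ with hm0def
  have hm0 : 0 < m0 := by
    rw [hm0def, integral_pos_iff_support_of_nonneg_ae
      (by filter_upwards [hμpos] with t ht using ht.le) hid_int]
    have hsub : {t : ℝ | 0 < t} ⊆ Function.support fun t : ℝ => t := by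
      intro t ht; exact ne_of_gt ht
    have h1 : μ {t : ℝ | ¬ (0 < t)} = 0 := ae_iff.mp hμpos
    by_contra h
    push_neg at h
    have h2 : μ (Function.support fun t : ℝ => t) = 0 := le_antisymm h zero_le
    have h3 : μ {t : ℝ | 0 < t} = 0 := le_antisymm ((measure_mono hsub).trans h2.le) zero_le
    have h4 : μ Set.univ ≤ μ {t : ℝ | 0 < t} + μ {t : ℝ | ¬ (0 < t)} := by
      refine (measure_mono ?_).trans (measure_union_le _ _)
      intro t _
      by_cases ht : 0 < t
      · exact Or.inl ht
      · exact Or.inr ht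
    rw [measure_univ, h3, h1] at h4
    simp at h4
  -- integrability of merge compositions
  have hFmerge : ∀ k : ℕ, Integrable
      (fun p : (Fin n → ℝ) × (Fin n → ℝ) => Ffun hn (mergeFun k p.1 p.2)) (P.prod P) := by
    intro k
    have := ((mp_merge μ k).integrable_comp (Ffun_measurable hn).aestronglyMeasurable).mpr hFint
    exact this
  -- step 7 : U integrable, bounded below
  have hUint : ∀ k : ℕ, Integrable (Ufun μ hn k) P := by
    intro k
    have := (hFmerge k).integral_prod_left
    exact this
  have hevalP : Integrable (fun y : Fin n → ℝ => y jl) P := by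
    have := ((mp_eval (n := n) μ jl).integrable_comp
      measurable_id.aestronglyMeasurable).mpr hid_int
    simpa [Function.comp] using this
  have hevalPval : ∫ y, y jl ∂P = m0 := by
    have h := integral_map (μ := P) (f := fun t : ℝ => t)
      (measurable_pi_apply jl : Measurable fun x : Fin n → ℝ => x jl).aemeasurable
      aestronglyMeasurable_id
    rw [(mp_eval (n := n) μ jl).map_eq] at h
    exact h.symm
  have hUlb : ∀ k : ℕ, k < n → ∀ᵐ x ∂P, m0 ≤ Ufun μ hn k x := by
    intro k hk
    have hslice : ∀ᵐ x ∂P, Integrable (fun y => Ffun hn (mergeFun k x y)) P :=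
      ((integrable_prod_iff ((Ffun_measurable hn).comp
        (merge_measurable k)).aestronglyMeasurable).mp (hFmerge k)).1
    filter_upwards [hslice] with x hx
    rw [← hevalPval]
    unfold Ufun
    apply integral_mono hevalP hx
    intro y
    show y jl ≤ Ffun hn (mergeFun k x y)
    have h1 : y jl = mergeFun k x y jl := by
      have : ¬ ((jl : Fin n) : ℕ) < k := by
        simp only [hjl]
        omega
      simp [mergeFun, this]
    rw [h1]
    exact le_Ffun hn _ jl
  have hUpos : ∀ k : ℕ, k ≤ n → ∀ᵐ x ∂P, 0 < Ufun μ hn k x := by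
    intro k hk
    rcases lt_or_eq_of_le hk with hlt | heq
    · filter_upwards [hUlb k hlt] with x hx
      exact lt_of_lt_of_le hm0 hx
    · subst heq
      filter_upwards [hFpos] with x hx
      rwa [Ufun_top μ hn k le_rfl]
  -- step 8 : F * log U integrable
  have hFlogU : ∀ k : ℕ, k ≤ n →
      Integrable (fun x => Ffun hn x * Real.log (Ufun μ hn k x)) P := by
    intro k hk
    rcases lt_or_eq_of_le hk with hlt | heq
    · have hmeas : AEStronglyMeasurable
          (fun x => Ffun hn x * Real.log (Ufun μ hn k x)) P :=
        ((Ffun_measurable hn).mul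
          (Real.measurable_log.comp (Ufun_stronglyMeasurable μ hn k).measurable)).aestronglyMeasurable
      have hmaj : Integrable (fun x => |Ffun hn x * Real.log (Ffun hn x)| + Ufun μ hn k x
          + 1 + |Real.log m0| * Ffun hn x) P :=
        ((hFlog.abs.add (hUint k)).add (integrable_const 1)).add (hFint.const_mul _)
      apply Integrable.mono' hmaj hmeas
      filter_upwards [hUlb k hlt, hFpos] with x hU hF
      have hUx : 0 < Ufun μ hn k x := lt_of_lt_of_le hm0 hU
      rw [Real.norm_eq_abs, abs_mul, abs_of_pos hF]
      rcases le_or_gt 0 (Real.log (Ufun μ hn k x)) with hl | hl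
      · rw [abs_of_nonneg hl]
        have hy := aux_young (z := Ffun hn x) (a := 1) (t := Real.log (Ufun μ hn k x)) hF.le
          one_pos
        rw [Real.exp_log hUx] at hy
        have : Ffun hn x * Real.log (Ufun μ hn k x)
            ≤ |Ffun hn x * Real.log (Ffun hn x)| + Ufun μ hn k x := by
          have := le_abs_self (Ffun hn x * Real.log (Ffun hn x))
          simp only [Real.log_one, mul_zero, one_mul] at hy
          linarith
        have h2 : 0 ≤ |Real.log m0| * Ffun hn x := by positivity
        linarith
      · rw [abs_of_neg hl]
        have h1 : Real.log m0 ≤ Real.log (Ufun μ hn k x) := Real.log_le_log hm0 hU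
        have h2 : -Real.log (Ufun μ hn k x) ≤ |Real.log m0| := by
          have := neg_abs_le (Real.log m0)
          linarith
        have h3 : Ffun hn x * -Real.log (Ufun μ hn k x) ≤ |Real.log m0| * Ffun hn x := by
          rw [mul_comm]
          exact mul_le_mul_of_nonneg_right h2 hF.le
        have h4 : (0:ℝ) ≤ |Ffun hn x * Real.log (Ffun hn x)| := abs_nonneg _
        have h5 : (0:ℝ) < Ufun μ hn k x := hUx
        linarith
    · subst heq
      have heq2 : (fun x => Ffun hn x * Real.log (Ufun μ hn k x))
          = fun x => Ffun hn x * Real.log (Ffun hn x) := by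
        funext x
        rw [Ufun_top μ hn k le_rfl]
      rw [heq2]
      exact hFlog
  -- step 9 : D integrable and bounds
  have hDpos : ∀ᵐ x ∂P, ∀ i : Fin n, 0 ≤ Dfun hn i x := by
    filter_upwards [hpos] with x hx
    intro i
    have hG : 0 < Gfun hn i x := lt_of_lt_of_le hx (Sfun_le_Gfun hn i x)
    have hF : 0 ≤ Ffun hn x := le_trans hx.le (Sfun_le_Ffun hn x)
    have := aux_A1 hF hG
    unfold Dfun
    linarith
  have hDtot : ∀ᵐ x ∂P, ∑ i : Fin n, Dfun hn i x
      ≤ (Ffun hn x - Sfun hn x) ^ 2 / Sfun hn x := by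
    filter_upwards [hpos] with x hx
    rw [sum_Dfun_eq hn x]
    have := aux_A3 hx (Sfun_le_Ffun hn x)
    linarith
  have hDint : ∀ i : Fin n, Integrable (Dfun hn i) P := by
    intro i
    apply Integrable.mono' hRint (Dfun_measurable hn i).aestronglyMeasurable
    filter_upwards [hDpos, hDtot] with x hx1 hx2
    rw [Real.norm_eq_abs, abs_of_nonneg (hx1 i)]
    calc Dfun hn i x ≤ ∑ j : Fin n, Dfun hn j x :=
          Finset.single_le_sum (fun j _ => hx1 j) (Finset.mem_univ i)
      _ ≤ (Ffun hn x - Sfun hn x) ^ 2 / Sfun hn x := hx2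
  -- step 10 : per-coordinate inequality
  have hperk : ∀ k : ℕ, (hk : k < n) →
      ∫ x, Ffun hn x * (Real.log (Ufun μ hn (k + 1) x) - Real.log (Ufun μ hn k x)) ∂P
        ≤ ∫ x, Dfun hn ⟨k, hk⟩ x ∂P := by
    intro k hk
    set κ : Fin n := ⟨k, hk⟩ with hκdef
    -- helper : composition with update is integrable
    have comp_int : ∀ {Φ : (Fin n → ℝ) → ℝ}, Measurable Φ → Integrable Φ P →
        Integrable (fun p : (Fin n → ℝ) × ℝ => Φ (Function.update p.1 κ p.2)) (P.prod μ) := by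
      intro Φ hm hi
      have := ((mp_update (n := n) μ κ).integrable_comp hm.aestronglyMeasurable).mpr hi
      simpa [Function.comp_def] using this
    have int_eq : ∀ {Φ : (Fin n → ℝ) → ℝ}, Measurable Φ → Integrable Φ P →
        ∫ x, Φ x ∂P = ∫ x, ∫ t, Φ (Function.update x κ t) ∂μ ∂P := by
      intro Φ hm hi
      conv_lhs => rw [hPdef, ← (mp_update (n := n) μ κ).map_eq]
      rw [integral_map (mp_update (n := n) μ κ).aemeasurable hm.aestronglyMeasurable]
      exact integral_prod _ (comp_int hm hi)
    have slice_int : ∀ {Φ : (Fin n → ℝ) → ℝ}, Measurable Φ → Integrable Φ P →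
        ∀ᵐ x ∂P, Integrable (fun t => Φ (Function.update x κ t)) μ := by
      intro Φ hm hi
      exact ((integrable_prod_iff
        ((hm.comp (mp_update (n := n) μ κ).measurable).aestronglyMeasurable)).mp
        (comp_int hm hi)).1
    have ae_upd : ∀ {q : (Fin n → ℝ) → Prop}, MeasurableSet {x | q x} → (∀ᵐ x ∂P, q x) →
        ∀ᵐ x ∂P, ∀ᵐ t ∂μ, q (Function.update x κ t) := by
      intro q hms hq
      rw [hPdef] at hq
      rw [← (mp_update (n := n) μ κ).map_eq] at hq
      have h1 := (ae_map_iff (mp_update (n := n) μ κ).aemeasurable hms).mp hq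
      exact Measure.ae_ae_of_ae_prod h1
    -- measurability facts
    have hFm := Ffun_measurable hn
    have hU1m : Measurable (Ufun μ hn (k + 1)) := (Ufun_stronglyMeasurable μ hn (k + 1)).measurable
    have hU0m : Measurable (Ufun μ hn k) := (Ufun_stronglyMeasurable μ hn k).measurable
    have hFlnFm : Measurable (fun x => Ffun hn x * Real.log (Ffun hn x)) :=
      hFm.mul (Real.measurable_log.comp hFm)
    have hFlnU1m : Measurable (fun x => Ffun hn x * Real.log (Ufun μ hn (k + 1) x)) :=
      hFm.mul (Real.measurable_log.comp hU1m)
    have hHm : Measurable (fun x => Ffun hn x *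
        (Real.log (Ufun μ hn (k + 1) x) - Real.log (Ufun μ hn k x))) :=
      hFm.mul ((Real.measurable_log.comp hU1m).sub (Real.measurable_log.comp hU0m))
    have hHint : Integrable (fun x => Ffun hn x *
        (Real.log (Ufun μ hn (k + 1) x) - Real.log (Ufun μ hn k x))) P := by
      have heq : (fun x => Ffun hn x *
          (Real.log (Ufun μ hn (k + 1) x) - Real.log (Ufun μ hn k x)))
          = fun x => Ffun hn x * Real.log (Ufun μ hn (k + 1) x)
            - Ffun hn x * Real.log (Ufun μ hn k x) := by
        funext x; ring
      rw [heq]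
      exact (hFlogU (k + 1) hk).sub (hFlogU k hk.le)
    -- the conditional mean identity
    have hsliceM : ∀ᵐ x ∂P, Integrable (fun y => Ffun hn (mergeFun k x y)) P :=
      ((integrable_prod_iff ((Ffun_measurable hn).comp
        (merge_measurable k)).aestronglyMeasurable).mp (hFmerge k)).1
    have hmergemx : ∀ x : Fin n → ℝ, Measurable (fun y => Ffun hn (mergeFun k x y)) := by
      intro x
      apply (Ffun_measurable hn).comp
      apply measurable_pi_lambda
      intro j
      by_cases hj : (j : ℕ) < k
      · simpa [mergeFun, hj] using measurable_const
      · simpa [mergeFun, hj] using measurable_pi_apply j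
    have hvw : ∀ᵐ x ∂P, ∫ t, Ufun μ hn (k + 1) (Function.update x κ t) ∂μ = Ufun μ hn k x := by
      filter_upwards [hsliceM] with x hx
      have h1 : ∫ y, Ffun hn (mergeFun k x y) ∂P
          = ∫ y, ∫ t, Ffun hn (mergeFun k x (Function.update y κ t)) ∂μ ∂P :=
        int_eq (hmergemx x) hx
      have h2 : ∫ y, ∫ t, Ffun hn (mergeFun k x (Function.update y κ t)) ∂μ ∂P
          = ∫ t, ∫ y, Ffun hn (mergeFun k x (Function.update y κ t)) ∂P ∂μ := by
        apply integral_integral_swap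
        exact comp_int (hmergemx x) hx
      have h3 : ∀ t, ∫ y, Ffun hn (mergeFun k x (Function.update y κ t)) ∂P
          = Ufun μ hn (k + 1) (Function.update x κ t) := by
        intro t
        unfold Ufun
        rw [hPdef]
        congr 1
        funext y
        rw [merge_upd k κ rfl x y t]
      calc ∫ t, Ufun μ hn (k + 1) (Function.update x κ t) ∂μ
          = ∫ t, ∫ y, Ffun hn (mergeFun k x (Function.update y κ t)) ∂P ∂μ := by
            congr 1; funext t; exact (h3 t).symm
        _ = ∫ y, ∫ t, Ffun hn (mergeFun k x (Function.update y κ t)) ∂μ ∂P := h2.symm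
        _ = ∫ y, Ffun hn (mergeFun k x y) ∂P := h1.symm
        _ = Ufun μ hn k x := rfl
    -- rewrite both sides as iterated integrals and compare
    rw [int_eq hHm hHint, int_eq (Dfun_measurable hn κ) (hDint κ)]
    apply integral_mono_ae
      ((comp_int hHm hHint).integral_prod_left)
      ((comp_int (Dfun_measurable hn κ) (hDint κ)).integral_prod_left)
    have hms1 : MeasurableSet {x : Fin n → ℝ | 0 ≤ Ffun hn x} :=
      measurableSet_le measurable_const hFm
    have hms2 : MeasurableSet {x : Fin n → ℝ | 0 < Ufun μ hn (k + 1) x} :=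
      measurableSet_lt measurable_const hU1m
    filter_upwards [slice_int hFm hFint, slice_int hFlnFm hFlog,
      slice_int hFlnU1m (hFlogU (k + 1) hk), slice_int hU1m (hUint (k + 1)),
      ae_upd hms1 hFnonneg, ae_upd hms2 (hUpos (k + 1) hk),
      hUpos k hk.le, hpos, hvw] with x h1 h2 h3 h4 h5 h6 h7 h8 h9
    have hGx : 0 < Gfun hn κ x := lt_of_lt_of_le h8 (Sfun_le_Gfun hn κ x)
    show ∫ t, Ffun hn (Function.update x κ t) *
        (Real.log (Ufun μ hn (k + 1) (Function.update x κ t))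
          - Real.log (Ufun μ hn k (Function.update x κ t))) ∂μ
      ≤ ∫ t, Dfun hn κ (Function.update x κ t) ∂μ
    have eL : (fun t => Ffun hn (Function.update x κ t) *
        (Real.log (Ufun μ hn (k + 1) (Function.update x κ t))
          - Real.log (Ufun μ hn k (Function.update x κ t))))
        = fun t => Ffun hn (Function.update x κ t) *
          (Real.log (Ufun μ hn (k + 1) (Function.update x κ t))
            - Real.log (Ufun μ hn k x)) := by
      funext t
      rw [Ufun_update_eq μ hn k κ rfl x t]
    have eR : (fun t => Dfun hn κ (Function.update x κ t))
        = fun t => Ffun hn (Function.update x κ t)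
            * Real.log (Ffun hn (Function.update x κ t))
          - Ffun hn (Function.update x κ t) * Real.log (Gfun hn κ x)
          - Ffun hn (Function.update x κ t) + Gfun hn κ x := by
      funext t
      exact Dfun_update hn κ x t
    rw [eL, eR]
    exact lemC μ (fun t => Ffun hn (Function.update x κ t))
      (fun t => Ufun μ hn (k + 1) (Function.update x κ t))
      (Gfun hn κ x) (Ufun μ hn k x) hGx h7 h5 h6 h1 h2 h3 h4 h9
  -- step 11 : telescoping and conclusion
  have htele : ∑ k ∈ Finset.range n,
      ((∫ x, Ffun hn x * Real.log (Ufun μ hn (k + 1) x) ∂P)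
        - ∫ x, Ffun hn x * Real.log (Ufun μ hn k x) ∂P)
      = (∫ x, Ffun hn x * Real.log (Ufun μ hn n x) ∂P)
        - ∫ x, Ffun hn x * Real.log (Ufun μ hn 0 x) ∂P :=
    Finset.sum_range_sub (fun k => ∫ x, Ffun hn x * Real.log (Ufun μ hn k x) ∂P) n
  have hstep : ∀ k ∈ Finset.range n,
      ((∫ x, Ffun hn x * Real.log (Ufun μ hn (k + 1) x) ∂P)
        - ∫ x, Ffun hn x * Real.log (Ufun μ hn k x) ∂P)
      ≤ (if h : k < n then ∫ x, Dfun hn ⟨k, h⟩ x ∂P else 0) := by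
    intro k hk
    have hk' := Finset.mem_range.mp hk
    rw [dif_pos hk']
    have h1 : ((∫ x, Ffun hn x * Real.log (Ufun μ hn (k + 1) x) ∂P)
        - ∫ x, Ffun hn x * Real.log (Ufun μ hn k x) ∂P)
        = ∫ x, Ffun hn x * (Real.log (Ufun μ hn (k + 1) x)
            - Real.log (Ufun μ hn k x)) ∂P := by
      rw [← integral_sub (hFlogU (k + 1) hk') (hFlogU k hk'.le)]
      congr 1
      funext x
      ring
    rw [h1]
    exact hperk k hk'
  have hsum1 : (∫ x, Ffun hn x * Real.log (Ufun μ hn n x) ∂P)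
      - (∫ x, Ffun hn x * Real.log (Ufun μ hn 0 x) ∂P)
      ≤ ∑ k ∈ Finset.range n, (if h : k < n then ∫ x, Dfun hn ⟨k, h⟩ x ∂P else 0) := by
    rw [← htele]
    exact Finset.sum_le_sum hstep
  have hsum2 : ∑ k ∈ Finset.range n, (if h : k < n then ∫ x, Dfun hn ⟨k, h⟩ x ∂P else 0)
      = ∑ i : Fin n, ∫ x, Dfun hn i x ∂P := by
    rw [← Fin.sum_univ_eq_sum_range]
    apply Finset.sum_congr rfl
    intro i _
    rw [dif_pos i.isLt]
  have hsum3 : ∑ i : Fin n, ∫ x, Dfun hn i x ∂P = ∫ x, ∑ i : Fin n, Dfun hn i x ∂P :=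
    (integral_finset_sum Finset.univ fun i _ => hDint i).symm
  have hsum4 : ∫ x, ∑ i : Fin n, Dfun hn i x ∂P
      ≤ ∫ x, (Ffun hn x - Sfun hn x) ^ 2 / Sfun hn x ∂P :=
    integral_mono_ae (integrable_finset_sum _ fun i _ => hDint i) hRint hDtot
  have hn_val : ∫ x, Ffun hn x * Real.log (Ufun μ hn n x) ∂P
      = ∫ x, Ffun hn x * Real.log (Ffun hn x) ∂P :=
    integral_congr_ae (Filter.Eventually.of_forall fun x => by
      show Ffun hn x * Real.log (Ufun μ hn n x) = Ffun hn x * Real.log (Ffun hn x)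
      rw [Ufun_top μ hn n le_rfl])
  have h0_val : ∫ x, Ffun hn x * Real.log (Ufun μ hn 0 x) ∂P
      = (∫ x, Ffun hn x ∂P) * Real.log (∫ x, Ffun hn x ∂P) := by
    have heq : ∀ x, Ffun hn x * Real.log (Ufun μ hn 0 x)
        = Ffun hn x * Real.log (∫ y, Ffun hn y ∂P) := by
      intro x
      rw [Ufun_zero μ hn x]
    rw [integral_congr_ae (Filter.Eventually.of_forall heq), integral_mul_const]
  rw [hn_val, h0_val] at hsum1
  rw [hsum2, hsum3] at hsum1
  linarith

end Core

/-- Let `Y_1, …, Y_n` (`n ≥ 2`) be i.i.d. non-negative random variables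
with top two order statistics `M = Y_{n,n}` and `M2 = Y_{n-1,n}`, with `M2 > 0` a.s. and
all relevant expectations finite. Then
`E[M ln M] ≤ E[M] ln (E[M]) + E[(M - M2)² / M2]`. -/
theorem stmt10 {Ω : Type*} [MeasureSpace Ω] [IsProbabilityMeasure (ℙ : Measure Ω)]
    (n : ℕ) (hn : 2 ≤ n) (Y : Fin n → Ω → ℝ)
    (hmeas : ∀ i, Measurable (Y i))
    (hindep : iIndepFun Y ℙ)
    (hident : ∀ i j, Measure.map (Y i) ℙ = Measure.map (Y j) ℙ)
    (hnonneg : ∀ i, ∀ᵐ ω ∂ℙ, 0 ≤ Y i ω)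
    (M M2 : Ω → ℝ)
    (hM : ∀ ω, M ω = ⨆ i, Y i ω)
    (hM2 : ∀ ω, M2 ω =
      Finset.univ.inf'
        (Finset.univ_nonempty_iff.mpr (Fin.pos_iff_nonempty.mp (by omega)))
        (fun i => (Finset.univ.erase i).sup'
          (Finset.card_pos.mp (by
            rw [Finset.card_erase_of_mem (Finset.mem_univ i), Finset.card_univ,
              Fintype.card_fin]
            omega))
          (fun j => Y j ω)))
    (hM2pos : ∀ᵐ ω ∂ℙ, 0 < M2 ω)
    (hMint : Integrable M ℙ)
    (hMlogint : Integrable (fun ω => M ω * Real.log (M ω)) ℙ)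
    (hratioint : Integrable (fun ω => (M ω - M2 ω) ^ 2 / M2 ω) ℙ) :
    ∫ ω, M ω * Real.log (M ω) ∂ℙ
      ≤ (∫ ω, M ω ∂ℙ) * Real.log (∫ ω, M ω ∂ℙ)
        + ∫ ω, (M ω - M2 ω) ^ 2 / M2 ω ∂ℙ := by
  set i0 : Fin n := ⟨0, by omega⟩ with hi0
  set μ : Measure ℝ := Measure.map (Y i0) ℙ with hμdef
  haveI : IsProbabilityMeasure μ := Measure.isProbabilityMeasure_map (hmeas i0).aemeasurable
  set T : Ω → (Fin n → ℝ) := fun ω i => Y i ω with hTdef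
  have hT : Measurable T := measurable_pi_lambda _ fun i => hmeas i
  have hmapT : Measure.map T ℙ = Measure.pi (fun _ : Fin n => μ) := by
    refine (Measure.pi_eq fun s hs => ?_).symm
    rw [Measure.map_apply hT (MeasurableSet.univ_pi hs)]
    have hpre : T ⁻¹' Set.pi Set.univ s = ⋂ i ∈ Finset.univ, Y i ⁻¹' s i := by
      ext ω; simp [hTdef]
    rw [hpre, hindep.measure_inter_preimage_eq_mul Finset.univ (fun i _ => hs i)]
    apply Finset.prod_congr rfl
    intro i _
    rw [hμdef, ← hident i i0, Measure.map_apply (hmeas i) (hs i)]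
  have hM_eq : ∀ ω, M ω = Ffun hn (T ω) := by
    intro ω
    rw [hM ω]
    exact (Ffun_eq_iSup hn (T ω)).symm
  have hM2_eq : ∀ ω, M2 ω = Sfun hn (T ω) := by
    intro ω
    rw [hM2 ω]
    rfl
  -- transfer of the three integrals
  have hFm := Ffun_measurable hn
  have hSm := Sfun_measurable hn
  have hFlnFm : Measurable (fun x : Fin n → ℝ => Ffun hn x * Real.log (Ffun hn x)) :=
    hFm.mul (Real.measurable_log.comp hFm)
  have hRm : Measurable (fun x : Fin n → ℝ => (Ffun hn x - Sfun hn x) ^ 2 / Sfun hn x) :=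
    (((hFm.sub hSm).pow measurable_const)).div hSm
  have h1 : ∫ ω, M ω * Real.log (M ω) ∂ℙ
      = ∫ x, Ffun hn x * Real.log (Ffun hn x) ∂(Measure.pi fun _ : Fin n => μ) := by
    rw [← hmapT, integral_map hT.aemeasurable hFlnFm.aestronglyMeasurable]
    apply integral_congr_ae
    exact Filter.Eventually.of_forall fun ω => by
      show M ω * Real.log (M ω) = Ffun hn (T ω) * Real.log (Ffun hn (T ω))
      rw [hM_eq ω]
  have h2 : ∫ ω, M ω ∂ℙ = ∫ x, Ffun hn x ∂(Measure.pi fun _ : Fin n => μ) := by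
    rw [← hmapT, integral_map hT.aemeasurable hFm.aestronglyMeasurable]
    apply integral_congr_ae
    exact Filter.Eventually.of_forall fun ω => by
      show M ω = Ffun hn (T ω)
      rw [hM_eq ω]
  have h3 : ∫ ω, (M ω - M2 ω) ^ 2 / M2 ω ∂ℙ
      = ∫ x, (Ffun hn x - Sfun hn x) ^ 2 / Sfun hn x ∂(Measure.pi fun _ : Fin n => μ) := by
    rw [← hmapT, integral_map hT.aemeasurable hRm.aestronglyMeasurable]
    apply integral_congr_ae
    exact Filter.Eventually.of_forall fun ω => by
      show (M ω - M2 ω) ^ 2 / M2 ω = (Ffun hn (T ω) - Sfun hn (T ω)) ^ 2 / Sfun hn (T ω)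
      rw [hM_eq ω, hM2_eq ω]
  -- transfer hypotheses
  have hpos' : ∀ᵐ x ∂(Measure.pi fun _ : Fin n => μ), 0 < Sfun hn x := by
    rw [← hmapT]
    rw [ae_map_iff hT.aemeasurable (measurableSet_lt measurable_const hSm)]
    filter_upwards [hM2pos] with ω h
    rwa [hM2_eq ω] at h
  have hFint : Integrable (Ffun hn) (Measure.pi fun _ : Fin n => μ) := by
    rw [← hmapT]
    rw [integrable_map_measure hFm.aestronglyMeasurable hT.aemeasurable]
    exact hMint.congr (Filter.Eventually.of_forall fun ω => hM_eq ω)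
  have hFlog : Integrable (fun x => Ffun hn x * Real.log (Ffun hn x))
      (Measure.pi fun _ : Fin n => μ) := by
    rw [← hmapT]
    rw [integrable_map_measure hFlnFm.aestronglyMeasurable hT.aemeasurable]
    exact hMlogint.congr (Filter.Eventually.of_forall fun ω => by
      show M ω * Real.log (M ω) = Ffun hn (T ω) * Real.log (Ffun hn (T ω))
      rw [hM_eq ω])
  have hRint : Integrable (fun x => (Ffun hn x - Sfun hn x) ^ 2 / Sfun hn x)
      (Measure.pi fun _ : Fin n => μ) := by
    rw [← hmapT]
    rw [integrable_map_measure hRm.aestronglyMeasurable hT.aemeasurable]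
    exact hratioint.congr (Filter.Eventually.of_forall fun ω => by
      show (M ω - M2 ω) ^ 2 / M2 ω = (Ffun hn (T ω) - Sfun hn (T ω)) ^ 2 / Sfun hn (T ω)
      rw [hM_eq ω, hM2_eq ω])
  rw [h1, h2, h3]
  exact core hn μ hpos' hFint hFlog hRint
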